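/- Let d ≥ 3 and let F ∈ (ℂ^n)^{⊗d} be a sharp, concise, symmetric tensor of minimal border rank, with corresponding degree-d polynomial p_F. Let I ⊆ S be the ideal generated by all multidegree components Ann(F)_u with 0 < u < 𝟏 (componentwise). Then π(I_{(d−1)e_1 + e_2}) ⊆ Ann(p_F)_d. -/

import Mathlib

/-!
Common setup, following the paper "On the abundance of minimal border rank symmetric
tensors verifying Comon's conjecture".

* `S = ℂ[α_{i,j} : 1 ≤ i ≤ d, 1 ≤ j ≤ n]` is modeled as `MvPolynomial (Fin d × Fin n) ℂ`,
  with the `ℤ^d`-grading in which `deg α_{i,j} = e_i`; `Scomp n d u` is the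
  multidegree-`u` component (`u : Fin d → ℕ`).
* `V = ℂ[β_1,…,β_n]` is modeled as `MvPolynomial (Fin n) ℂ` with its standard grading;
  `Vcomp n N` is the degree-`N` component.
* The graded duals `T` and `P` are modeled by the same polynomial rings, with `S`
  (resp. `V`) acting by differentiation (`apolar`); `ann F` is the apolar
  (annihilator) ideal of `F`.
* A tensor `F ∈ (ℂ^n)^{⊗d}` is an element of the multidegree-`(1,…,1)` component
  `Scomp n d (fun _ => 1)` (a multilinear form in the `x_{i,j}`).
-/

open MvPolynomial Submodule Module

noncomputable section

namespace BorderComon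

/-- the multidegree-`u` graded component of `S`. -/
def Scomp (n d : ℕ) (u : Fin d → ℕ) : Submodule ℂ (MvPolynomial (Fin d × Fin n) ℂ) :=
  weightedHomogeneousSubmodule ℂ (fun p : Fin d × Fin n => Pi.single p.1 1) u

/-- the degree-`N` graded component of `V`. -/
def Vcomp (n : ℕ) (N : ℕ) : Submodule ℂ (MvPolynomial (Fin n) ℂ) :=
  homogeneousSubmodule (Fin n) ℂ N

/-- the diagonal ring map `π : S → V`, `α_{i,j} ↦ β_j`. -/
def piAlg (n d : ℕ) : MvPolynomial (Fin d × Fin n) ℂ →ₐ[ℂ] MvPolynomial (Fin n) ℂ :=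
  aeval (fun p : Fin d × Fin n => X p.2)

/-- `π` as a `ℂ`-linear map. -/
def piL (n d : ℕ) : MvPolynomial (Fin d × Fin n) ℂ →ₗ[ℂ] MvPolynomial (Fin n) ℂ :=
  (piAlg n d).toLinearMap

/-- the ring map `ρ : S → V`, `α_{1,j} ↦ β_j` and `α_{i,j} ↦ 0` for `i ≥ 2`
(rows are `0`-indexed, so the first row is row `0`). -/
def rho (n d : ℕ) : MvPolynomial (Fin d × Fin n) ℂ →ₐ[ℂ] MvPolynomial (Fin n) ℂ :=
  aeval (fun p : Fin d × Fin n => if (p.1 : ℕ) = 0 then X p.2 else 0)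

/-- the result of differentiating `F` by the monomial `X^a`:
`∂^a X^b = (∏_i b_i!/(b_i-a_i)!) X^{b-a}` (and `= 0` unless `a ≤ b`, which is
automatic since the descending factorial vanishes there). -/
def diffMon {σ : Type*} (a : σ →₀ ℕ) (F : MvPolynomial σ ℂ) : MvPolynomial σ ℂ :=
  ∑ b ∈ F.support, (F.coeff b * ∏ i ∈ a.support, ((b i).descFactorial (a i) : ℂ)) •
    monomial (b - a) (1 : ℂ)

/-- the apolarity action: `apolar F ψ = ψ ∘ F` is the result of letting `ψ` act on `F`
by differentiation, linearly in `ψ`. -/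
def apolar {σ : Type*} (F : MvPolynomial σ ℂ) : MvPolynomial σ ℂ →ₗ[ℂ] MvPolynomial σ ℂ :=
  Finsupp.lsum ℂ (fun a : σ →₀ ℕ => LinearMap.toSpanSingleton ℂ _ (diffMon a F)) ∘ₗ
    (AddMonoidAlgebra.coeffLinearEquiv ℂ).toLinearMap

/-- the apolar (annihilator) ideal `Ann(F) = {ψ : ψ ∘ F = 0}`, as a subspace. -/
def ann {σ : Type*} (F : MvPolynomial σ ℂ) : Submodule ℂ (MvPolynomial σ ℂ) :=
  LinearMap.ker (apolar F)

/-- the ideal `I_R ⊆ S` generated by the `2×2` minors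
`α_{i,j} α_{k,ℓ} − α_{i,ℓ} α_{k,j}`, `i < k`, `j < ℓ`. -/
def IR (n d : ℕ) : Ideal (MvPolynomial (Fin d × Fin n) ℂ) :=
  Ideal.span {q | ∃ i k : Fin d, ∃ j l : Fin n, i < k ∧ j < l ∧
    q = X (i, j) * X (k, l) - X (i, l) * X (k, j)}

/-- `J ⊆ S` is a (multigraded) homogeneous ideal: it is the sum of its
multigraded components. -/
def IsHomogS (n d : ℕ) (J : Ideal (MvPolynomial (Fin d × Fin n) ℂ)) : Prop :=
  Submodule.restrictScalars ℂ J = ⨆ u : Fin d → ℕ, (Submodule.restrictScalars ℂ J ⊓ Scomp n d u)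

/-- `I ⊆ V` is a homogeneous ideal: it is the sum of its graded components. -/
def IsHomogV (n : ℕ) (I : Ideal (MvPolynomial (Fin n) ℂ)) : Prop :=
  Submodule.restrictScalars ℂ I = ⨆ N : ℕ, (Submodule.restrictScalars ℂ I ⊓ Vcomp n N)

/-- the exponent redistribution underlying `ψ_u`: in the sorted list
`i_1 ≤ ⋯ ≤ i_N` of the indices of the monomial `β^γ` (value `j` occurring `γ j`
times, `N = |γ|`), row `i` receives the block of positions
`[∑_{i'<i} u i', ∑_{i'≤i} u i')`, while value `j` occupies positions
`[∑_{j'<j} γ j', ∑_{j'≤j} γ j')`; hence the exponent of `α_{i,j}` is the size of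
the intersection of these two intervals. -/
def distrib (n d : ℕ) (u : Fin d → ℕ) (γ : Fin n →₀ ℕ) : (Fin d × Fin n) →₀ ℕ :=
  Finsupp.equivFunOnFinite.symm fun p : Fin d × Fin n =>
    min (∑ i ∈ Finset.univ.filter fun i : Fin d => (i : ℕ) ≤ (p.1 : ℕ), u i)
        (∑ j ∈ Finset.univ.filter fun j : Fin n => (j : ℕ) ≤ (p.2 : ℕ), γ j)
    - max (∑ i ∈ Finset.univ.filter fun i : Fin d => (i : ℕ) < (p.1 : ℕ), u i)
          (∑ j ∈ Finset.univ.filter fun j : Fin n => (j : ℕ) < (p.2 : ℕ), γ j)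

/-- the linear map `ψ_u : V → S` sending a monomial `β_{i_1} β_{i_2} ⋯ β_{i_N}`
with `i_1 ≤ i_2 ≤ ⋯ ≤ i_N` to
`(α_{1,i_1} ⋯ α_{1,i_{u_1}}) (α_{2,i_{u_1+1}} ⋯ α_{2,i_{u_1+u_2}}) ⋯`.
(Its restriction to `Vcomp n (∑ i, u i)` is the map `ψ_u : V_{|u|} → S_u` of the
paper.) -/
def psi (n d : ℕ) (u : Fin d → ℕ) :
    MvPolynomial (Fin n) ℂ →ₗ[ℂ] MvPolynomial (Fin d × Fin n) ℂ :=
  AddMonoidAlgebra.mapDomainLinearMap ℂ ℂ (distrib n d u)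

/-- `Υ(I) = I_R + ∑_{u} ψ_u(I_{|u|}) ⊆ S`. -/
def Upsilon (n d : ℕ) (I : Ideal (MvPolynomial (Fin n) ℂ)) :
    Submodule ℂ (MvPolynomial (Fin d × Fin n) ℂ) :=
  restrictScalars ℂ (IR n d) ⊔
    ⨆ u : Fin d → ℕ, Submodule.map (psi n d u) (restrictScalars ℂ I ⊓ Vcomp n (∑ i, u i))

/-- the irrelevant ideal `B_X = ∏_{i=1}^d (α_{i,1},…,α_{i,n}) ⊆ S`. -/
def BX (n d : ℕ) : Ideal (MvPolynomial (Fin d × Fin n) ℂ) :=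
  ∏ i : Fin d, Ideal.span (Set.range fun j : Fin n => X (i, j))

/-- the irrelevant ideal `B_Y = (β_1,…,β_n) ⊆ V`. -/
def BY (n : ℕ) : Ideal (MvPolynomial (Fin n) ℂ) :=
  Ideal.span (Set.range X)

/-- `Σ(J) = ⊕_{a ≥ 0} ⊕_{s ∈ ℰ} π(J_{a𝟏+s}) ⊆ V`, where
`ℰ = {0, e_1, e_1+e_2, …, e_1+⋯+e_{d-1}}` (the element `s` with `m` ones is
`fun i => if i < m then 1 else 0`). -/
def SigmaMap (n d : ℕ) (J : Ideal (MvPolynomial (Fin d × Fin n) ℂ)) :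
    Submodule ℂ (MvPolynomial (Fin n) ℂ) :=
  ⨆ a : ℕ, ⨆ m : Fin d, Submodule.map (piL n d)
    (restrictScalars ℂ J ⊓ Scomp n d (fun i => a + if (i : ℕ) < (m : ℕ) then 1 else 0))

/-- the set of tensors of rank at most `r`: sums of `r` decomposable tensors
`v_1 ⊗ ⋯ ⊗ v_d = ∏_i (∑_j v_i(j) x_{i,j})`. -/
def rankLE (n d r : ℕ) : Set (MvPolynomial (Fin d × Fin n) ℂ) :=
  {F | ∃ v : Fin r → Fin d → Fin n → ℂ,
    F = ∑ s : Fin r, ∏ i : Fin d, ∑ j : Fin n, C (v s i j) * X (i, j)}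

/-- `F` has border rank at most `r`: coefficientwise (finitely many coefficients are
involved), `F` lies in the closure of the set of tensors of rank at most `r`. -/
def brkLE (n d : ℕ) (F : MvPolynomial (Fin d × Fin n) ℂ) (r : ℕ) : Prop :=
  (fun m => coeff m F) ∈ closure ((fun G => fun m => coeff m G) '' rankLE n d r)

/-- the border rank of a tensor. -/
def brk (n d : ℕ) (F : MvPolynomial (Fin d × Fin n) ℂ) : ℕ :=
  sInf {r | brkLE n d F r}

/-- polynomials that are sums of `r` `d`-th powers of linear forms. -/
def srankLE (n d r : ℕ) : Set (MvPolynomial (Fin n) ℂ) :=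
  {p | ∃ c : Fin r → Fin n → ℂ, p = ∑ s : Fin r, (∑ j : Fin n, C (c s j) * X j) ^ d}

/-- `p` has symmetric border rank at most `r`. -/
def sbrkLE (n d : ℕ) (p : MvPolynomial (Fin n) ℂ) (r : ℕ) : Prop :=
  (fun m => coeff m p) ∈ closure ((fun q => fun m => coeff m q) '' srankLE n d r)

/-- the symmetric border rank of a degree-`d` form. -/
def sbrk (n d : ℕ) (p : MvPolynomial (Fin n) ℂ) : ℕ :=
  sInf {r | sbrkLE n d p r}

/-- `F` is a symmetric tensor: invariant under the permutations of the `d` factors. -/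
def IsSymm (n d : ℕ) (F : MvPolynomial (Fin d × Fin n) ℂ) : Prop :=
  ∀ τ : Equiv.Perm (Fin d), rename (Prod.map τ id) F = F

/-- the degree-`d` polynomial `p_F` corresponding to a symmetric tensor `F`, obtained
by identifying all the rows of variables (`x_{i,j} ↦ y_j`); `F` is the polarization
of `p_F`. -/
def pF (n d : ℕ) (F : MvPolynomial (Fin d × Fin n) ℂ) : MvPolynomial (Fin n) ℂ :=
  rename Prod.snd F

/-- `F` is concise: the contraction `(ℂ^n)^* → (ℂ^n)^{⊗(d-1)}` of the first tensor
factor, `w ↦ F(x_{1,j} := w_j)`, is injective. -/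
def Concise (n d : ℕ) (F : MvPolynomial (Fin d × Fin n) ℂ) : Prop :=
  Function.Injective fun w : Fin n → ℂ =>
    aeval (fun p : Fin d × Fin n => if (p.1 : ℕ) = 0 then C (w p.2) else X p) F

/-- the ideal `∑_{0<u<𝟏} S·Ann(F)_u` generated by the components `Ann(F)_u`,
`0 < u < 𝟏` (componentwise). -/
def midIdeal (n d : ℕ) (F : MvPolynomial (Fin d × Fin n) ℂ) :
    Ideal (MvPolynomial (Fin d × Fin n) ℂ) :=
  Ideal.span (⋃ u ∈ {u : Fin d → ℕ | 0 < u ∧ u < fun _ => 1},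
    ((ann F ⊓ Scomp n d u : Submodule ℂ (MvPolynomial (Fin d × Fin n) ℂ)) :
      Set (MvPolynomial (Fin d × Fin n) ℂ)))

/-- `F` is a *sharp* tensor:
(1) `Ann(F)` has exactly `n-1` minimal generators of multidegree `𝟏`;
(2) `dim (S/Ann F)_u = n` for all `0 < u < 𝟏`;
(3) `dim (S/(Ann(F)_{e_i+e_j}))_{s e_i + e_j} = n` for all `i ≠ j`, `1 ≤ s ≤ d-1`. -/
def Sharp (n d : ℕ) (F : MvPolynomial (Fin d × Fin n) ℂ) : Prop :=
  (finrank ℂ (ann F ⊓ Scomp n d fun _ => 1 :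
        Submodule ℂ (MvPolynomial (Fin d × Fin n) ℂ)) -
      finrank ℂ (restrictScalars ℂ (midIdeal n d F) ⊓ Scomp n d fun _ => 1 :
        Submodule ℂ (MvPolynomial (Fin d × Fin n) ℂ)) = n - 1) ∧
  (∀ u : Fin d → ℕ, 0 < u → u < (fun _ => 1) →
    finrank ℂ (Scomp n d u ⧸ Submodule.comap (Scomp n d u).subtype (ann F)) = n) ∧
  (∀ i j : Fin d, i ≠ j → ∀ s : ℕ, 1 ≤ s → s ≤ d - 1 →
    finrank ℂ (Scomp n d (Pi.single i s + Pi.single j 1) ⧸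
      Submodule.comap (Scomp n d (Pi.single i s + Pi.single j 1)).subtype
        (restrictScalars ℂ (Ideal.span
          ((ann F ⊓ Scomp n d (Pi.single i 1 + Pi.single j 1) :
            Submodule ℂ (MvPolynomial (Fin d × Fin n) ℂ)) :
            Set (MvPolynomial (Fin d × Fin n) ℂ))))) = n)

section ApolarBasic
set_option linter.unusedSectionVars false
variable {σ : Type*} [DecidableEq σ]

theorem apolar_apply (F ψ : MvPolynomial σ ℂ) :
    apolar F ψ = ∑ a ∈ ψ.support, coeff a ψ • diffMon a F := rfl

/-- `diffMon a` as a linear map. -/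
def diffMonL (a : σ →₀ ℕ) : MvPolynomial σ ℂ →ₗ[ℂ] MvPolynomial σ ℂ :=
  Finsupp.lsum ℂ (fun b : σ →₀ ℕ => LinearMap.toSpanSingleton ℂ (MvPolynomial σ ℂ)
    ((∏ i ∈ a.support, ((b i).descFactorial (a i) : ℂ)) • monomial (b - a) (1 : ℂ))) ∘ₗ
    (AddMonoidAlgebra.coeffLinearEquiv ℂ).toLinearMap

theorem diffMonL_apply (a : σ →₀ ℕ) (F : MvPolynomial σ ℂ) :
    diffMonL a F = ∑ b ∈ F.support,
      coeff b F • ((∏ i ∈ a.support, ((b i).descFactorial (a i) : ℂ)) • monomial (b - a) (1 : ℂ)) :=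
  rfl

theorem diffMon_eq (a : σ →₀ ℕ) (F : MvPolynomial σ ℂ) : diffMon a F = diffMonL a F := by
  rw [diffMon, diffMonL_apply]
  exact Finset.sum_congr rfl fun b _ => by rw [smul_smul]

theorem diffMon_monomial (a b : σ →₀ ℕ) (c : ℂ) :
    diffMon a (monomial b c) =
      (c * ∏ i ∈ a.support, ((b i).descFactorial (a i) : ℂ)) • monomial (b - a) (1 : ℂ) := by
  rw [diffMon_eq]
  have h : diffMonL a (monomial b c) =
      c • ((∏ i ∈ a.support, ((b i).descFactorial (a i) : ℂ)) • monomial (b - a) (1 : ℂ)) :=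
    Finsupp.sum_single_index (by simp)
  rw [h, smul_smul]

theorem apolar_monomial (F : MvPolynomial σ ℂ) (a : σ →₀ ℕ) (c : ℂ) :
    apolar F (monomial a c) = c • diffMon a F := by
  exact Finsupp.sum_single_index (by simp [diffMon_eq])

theorem diffMon_add (a : σ →₀ ℕ) (F G : MvPolynomial σ ℂ) :
    diffMon a (F + G) = diffMon a F + diffMon a G := by
  simp [diffMon_eq]

theorem diffMon_zero_poly (a : σ →₀ ℕ) : diffMon a (0 : MvPolynomial σ ℂ) = 0 := by
  simp [diffMon_eq]

theorem diffMon_smul (a : σ →₀ ℕ) (c : ℂ) (F : MvPolynomial σ ℂ) :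
    diffMon a (c • F) = c • diffMon a F := by
  simp [diffMon_eq]

theorem diffMon_zero (F : MvPolynomial σ ℂ) : diffMon 0 F = F := by
  rw [diffMon]
  simp only [Finsupp.coe_zero, Pi.zero_apply, Finsupp.support_zero, Finset.prod_empty,
    mul_one, tsub_zero, smul_monomial, smul_eq_mul]
  exact support_sum_monomial_coeff F

theorem apolar_zero_left (ψ : MvPolynomial σ ℂ) : apolar (0 : MvPolynomial σ ℂ) ψ = 0 := by
  induction ψ using MvPolynomial.induction_on' with
  | monomial a c => rw [apolar_monomial, diffMon_zero_poly, smul_zero]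
  | add p q hp hq => rw [map_add, hp, hq, add_zero]

theorem apolar_add_left (F G : MvPolynomial σ ℂ) (ψ : MvPolynomial σ ℂ) :
    apolar (F + G) ψ = apolar F ψ + apolar G ψ := by
  induction ψ using MvPolynomial.induction_on' with
  | monomial a c => simp [apolar_monomial, diffMon_add, smul_add]
  | add p q hp hq => simp only [map_add, hp, hq]; abel

theorem apolar_smul_left (c : ℂ) (F : MvPolynomial σ ℂ) (ψ : MvPolynomial σ ℂ) :
    apolar (c • F) ψ = c • apolar F ψ := by
  induction ψ using MvPolynomial.induction_on' with
  | monomial a b => simp [apolar_monomial, diffMon_smul, smul_comm c b]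
  | add p q hp hq => simp only [map_add, hp, hq, smul_add]

/-- composition: `∂^a ∘ ∂^b = ∂^{a+b}`. -/
theorem diffMon_diffMon (a b : σ →₀ ℕ) (F : MvPolynomial σ ℂ) :
    diffMon a (diffMon b F) = diffMon (a + b) F := by
  induction F using MvPolynomial.induction_on' with
  | add p q hp hq => rw [diffMon_add, diffMon_add, diffMon_add, hp, hq]
  | monomial M c =>
    rw [diffMon_monomial, diffMon_smul, diffMon_monomial, diffMon_monomial, smul_smul, one_mul]
    have hsub : M - b - a = M - (a + b) := by rw [tsub_tsub, add_comm a b]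
    rw [hsub]
    congr 1
    have hsupp : (a + b).support = a.support ∪ b.support := by
      ext i
      simp only [Finsupp.mem_support_iff, Finsupp.add_apply, Finset.mem_union, Nat.add_eq_zero,
        not_and_or]
      omega
    have key : ∀ m kb ka : ℕ, (m.descFactorial kb : ℂ) * ((m - kb).descFactorial ka : ℂ)
        = (m.descFactorial (ka + kb) : ℂ) := by
      intro m kb ka
      rw [← Nat.cast_mul]
      congr 1
      induction ka with
      | zero => simp
      | succ k ih =>
        rw [Nat.descFactorial_succ, Nat.add_right_comm, Nat.descFactorial_succ, ← ih,
          Nat.sub_sub]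
        ring
    calc c * (∏ i ∈ b.support, ((M i).descFactorial (b i) : ℂ))
          * ∏ i ∈ a.support, (((M - b) i).descFactorial (a i) : ℂ)
        = c * ((∏ i ∈ a.support ∪ b.support, ((M i).descFactorial (b i) : ℂ))
          * ∏ i ∈ a.support ∪ b.support, (((M - b) i).descFactorial (a i) : ℂ)) := by
          rw [Finset.prod_subset Finset.subset_union_right
              (f := fun i => ((M i).descFactorial (b i) : ℂ)),
            Finset.prod_subset Finset.subset_union_left
              (f := fun i => (((M - b) i).descFactorial (a i) : ℂ))]
          · ring
          · intro x _ hx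
            rw [Finsupp.notMem_support_iff.mp hx, Nat.descFactorial_zero, Nat.cast_one]
          · intro x _ hx
            rw [Finsupp.notMem_support_iff.mp hx, Nat.descFactorial_zero, Nat.cast_one]
    _ = c * ∏ i ∈ (a + b).support, ((M i).descFactorial ((a + b) i) : ℂ) := by
          rw [hsupp, ← Finset.prod_mul_distrib]
          congr 1
          refine Finset.prod_congr rfl fun i _ => ?_
          rw [Finsupp.tsub_apply, key, Finsupp.add_apply]

/-- the action property: `(φχ) ∘ F = φ ∘ (χ ∘ F)`. -/
theorem apolar_mul (G : MvPolynomial σ ℂ) (φ χ : MvPolynomial σ ℂ) :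
    apolar G (φ * χ) = apolar (apolar G χ) φ := by
  induction φ using MvPolynomial.induction_on' with
  | add p q hp hq => rw [add_mul, map_add, hp, hq, map_add]
  | monomial a c =>
    induction χ using MvPolynomial.induction_on' with
    | add p q hp hq => rw [mul_add, map_add, hp, hq, map_add, apolar_add_left]
    | monomial b c' =>
      rw [monomial_mul, apolar_monomial, apolar_monomial, apolar_monomial,
        diffMon_smul, diffMon_diffMon, smul_smul, mul_comm c c']

end ApolarBasic
section Equivariance
set_option linter.unusedSectionVars false
variable {σ : Type*} [DecidableEq σ]

theorem mapDomain_tsub (e : σ ≃ σ) (M a : σ →₀ ℕ) :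
    Finsupp.mapDomain ⇑e (M - a) = Finsupp.mapDomain ⇑e M - Finsupp.mapDomain ⇑e a := by
  ext b
  have h : ∀ v : σ →₀ ℕ, Finsupp.mapDomain ⇑e v b = v (e.symm b) := by
    intro v
    have := Finsupp.mapDomain_apply e.injective v (e.symm b)
    rwa [Equiv.apply_symm_apply] at this
  rw [Finsupp.tsub_apply, h, h, h, Finsupp.tsub_apply]

theorem diffMon_rename (e : σ ≃ σ) (a : σ →₀ ℕ) (F : MvPolynomial σ ℂ) :
    diffMon (Finsupp.mapDomain ⇑e a) (rename ⇑e F) = rename ⇑e (diffMon a F) := by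
  induction F using MvPolynomial.induction_on' with
  | add p q hp hq => rw [map_add, diffMon_add, diffMon_add, map_add, hp, hq]
  | monomial M c =>
    rw [rename_monomial, diffMon_monomial, diffMon_monomial, map_smul, rename_monomial,
      ← mapDomain_tsub]
    congr 2
    rw [Finsupp.mapDomain_support_of_injective e.injective]
    rw [Finset.prod_image (fun x _ y _ h => e.injective h)]
    refine Finset.prod_congr rfl fun p _ => ?_
    rw [Finsupp.mapDomain_apply e.injective, Finsupp.mapDomain_apply e.injective]

theorem apolar_rename (e : σ ≃ σ) (F ψ : MvPolynomial σ ℂ) :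
    apolar (rename ⇑e F) (rename ⇑e ψ) = rename ⇑e (apolar F ψ) := by
  induction ψ using MvPolynomial.induction_on' with
  | monomial a c => rw [rename_monomial, apolar_monomial, apolar_monomial, map_smul, diffMon_rename]
  | add p q hp hq => simp only [map_add, hp, hq]

end Equivariance

section ChainRule
variable {n d : ℕ} {σ' : Type*} [DecidableEq σ']

/-- `ψ₀ : V → S`, `β_j ↦ ∑_i α_{i,j}`. -/
def PsiV (n d : ℕ) : MvPolynomial (Fin n) ℂ →ₐ[ℂ] MvPolynomial (Fin d × Fin n) ℂ :=
  aeval (fun j : Fin n => ∑ i : Fin d, X (i, j))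

/-- `Ψ : S → S`, `α_{i,j} ↦ ∑_r α_{r,j}`. -/
def PsiS (n d : ℕ) : MvPolynomial (Fin d × Fin n) ℂ →ₐ[ℂ] MvPolynomial (Fin d × Fin n) ℂ :=
  aeval (fun p : Fin d × Fin n => ∑ r : Fin d, X (r, p.2))

theorem mapDomain_snd_apply (M : (Fin d × Fin n) →₀ ℕ) (j : Fin n) :
    Finsupp.mapDomain Prod.snd M j = ∑ i : Fin d, M (i, j) := by
  classical
  rw [Finsupp.mapDomain, Finsupp.sum_apply]
  rw [Finsupp.sum]
  have h1 : ∀ p : Fin d × Fin n, (Finsupp.single p.2 (M p) : Fin n →₀ ℕ) j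
      = if p.2 = j then M p else 0 := fun p => Finsupp.single_apply
  calc ∑ p ∈ M.support, (Finsupp.single p.2 (M p) : Fin n →₀ ℕ) j
      = ∑ p : Fin d × Fin n, if p.2 = j then M p else 0 := by
        rw [Finset.sum_congr rfl fun p _ => h1 p]
        refine Finset.sum_subset (Finset.subset_univ _) fun p _ hp => ?_
        rw [Finsupp.notMem_support_iff.mp hp]
        simp
    _ = ∑ i : Fin d, M (i, j) := by
        rw [Fintype.sum_prod_type]
        refine Finset.sum_congr rfl fun i _ => ?_
        simp

theorem chain_single (j : Fin n) (F : MvPolynomial (Fin d × Fin n) ℂ) :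
    diffMon (Finsupp.single j 1) (rename Prod.snd F) =
      rename Prod.snd (∑ i : Fin d, diffMon (Finsupp.single (i, j) 1) F) := by
  induction F using MvPolynomial.induction_on' with
  | add p q hp hq =>
    simp only [map_add, diffMon_add, Finset.sum_add_distrib, hp, hq]
  | monomial M c =>
    rw [rename_monomial, diffMon_monomial]
    have hsupp : (Finsupp.single j (1:ℕ)).support = {j} :=
      Finsupp.support_single_ne_zero j one_ne_zero
    rw [hsupp, Finset.prod_singleton, Finsupp.single_eq_same, Nat.descFactorial_one]
    have hterm : ∀ i : Fin d,
        rename (Prod.snd : Fin d × Fin n → Fin n) (diffMon (Finsupp.single (i, j) 1) (monomial M c))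
          = (c * (M (i, j) : ℂ)) •
            monomial (Finsupp.mapDomain Prod.snd M - Finsupp.single j 1) (1 : ℂ) := by
      intro i
      rw [diffMon_monomial]
      have hs : (Finsupp.single (i, j) (1:ℕ)).support = {(i, j)} :=
        Finsupp.support_single_ne_zero _ one_ne_zero
      rw [hs, Finset.prod_singleton, Finsupp.single_eq_same, Nat.descFactorial_one,
        map_smul, rename_monomial]
      by_cases h : M (i, j) = 0
      · simp [h]
      · have hle : Finsupp.single (i, j) 1 ≤ M :=
          Finsupp.single_le_iff.mpr (Nat.one_le_iff_ne_zero.mpr h)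
        have hM : M - Finsupp.single (i, j) 1 + Finsupp.single (i, j) 1 = M :=
          tsub_add_cancel_of_le hle
        have h2 := congrArg (Finsupp.mapDomain (Prod.snd : Fin d × Fin n → Fin n)) hM
        rw [Finsupp.mapDomain_add, Finsupp.mapDomain_single] at h2
        rw [eq_tsub_of_add_eq h2]
    rw [map_sum, Finset.sum_congr rfl fun i _ => hterm i, ← Finset.sum_smul]
    rw [mapDomain_snd_apply, ← Finset.mul_sum, Nat.cast_sum]

theorem apolar_C (G : MvPolynomial σ' ℂ) (c : ℂ) : apolar G (C c) = c • G := by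
  rw [C_apply, apolar_monomial, diffMon_zero]

theorem apolar_X (G : MvPolynomial σ' ℂ) (j : σ') :
    apolar G (X j) = diffMon (Finsupp.single j 1) G := by
  rw [X, apolar_monomial, one_smul]

/-- the master chain rule: `χ ∘ (rename_snd F) = rename_snd ((ψ₀ χ) ∘ F)`. -/
theorem apolar_rename_snd (χ : MvPolynomial (Fin n) ℂ) (F : MvPolynomial (Fin d × Fin n) ℂ) :
    apolar (rename Prod.snd F) χ = rename Prod.snd (apolar F (PsiV n d χ)) := by
  induction χ using MvPolynomial.induction_on generalizing F with
  | C c => rw [apolar_C, PsiV, aeval_C, algebraMap_eq, apolar_C, map_smul]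
  | add p q hp hq => rw [map_add, hp, hq, map_add, map_add, ← map_add]
  | mul_X p j hp =>
    rw [apolar_mul, apolar_X, chain_single]
    have hF' : (∑ i : Fin d, diffMon (Finsupp.single (i, j) 1) F)
        = apolar F (PsiV n d (X j)) := by
      rw [PsiV, aeval_X, map_sum]
      exact Finset.sum_congr rfl fun i _ => (apolar_X F (i, j)).symm
    rw [hF', hp, map_mul]
    congr 1
    rw [apolar_mul]

end ChainRule
section Combinatorics
variable {n d : ℕ}

/-- row sums from the multigrading. -/
theorem weight_row {M : (Fin d × Fin n) →₀ ℕ} {u : Fin d → ℕ}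
    (h : Finsupp.weight (fun p : Fin d × Fin n => Pi.single p.1 (1 : ℕ)) M = u) (r : Fin d) :
    ∑ j : Fin n, M (r, j) = u r := by
  classical
  have hr := congrFun h r
  rw [Finsupp.weight_apply, Finsupp.sum] at hr
  rw [Finset.sum_apply] at hr
  rw [← hr]
  have h1 : ∀ p : Fin d × Fin n, (M p • (Pi.single p.1 (1 : ℕ) : Fin d → ℕ)) r
      = if p.1 = r then M p else 0 := by
    intro p
    rw [Pi.smul_apply, Pi.single_apply, smul_eq_mul]
    by_cases h : p.1 = r
    · simp [h]
    · simp [h, Ne.symm h]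
  calc ∑ j : Fin n, M (r, j)
      = ∑ p ∈ Finset.univ.filter (fun p : Fin d × Fin n => p.1 = r), M p := by
        rw [show Finset.univ.filter (fun p : Fin d × Fin n => p.1 = r)
            = Finset.univ.image (fun j : Fin n => (r, j)) from ?_]
        · rw [Finset.sum_image (fun x _ y _ h => by
            simpa using congrArg Prod.snd h)]
        · ext p
          simp only [Finset.mem_filter, Finset.mem_univ, true_and, Finset.mem_image]
          constructor
          · rintro rfl
            exact ⟨p.2, rfl⟩
          · rintro ⟨j, rfl⟩
            rfl
    _ = ∑ p : Fin d × Fin n, if p.1 = r then M p else 0 := Finset.sum_filter _ _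
    _ = ∑ p ∈ M.support, if p.1 = r then M p else 0 := by
        refine (Finset.sum_subset (Finset.subset_univ _) fun p _ hp => ?_).symm
        rw [Finsupp.notMem_support_iff.mp hp]
        simp
    _ = ∑ p ∈ M.support, (M p • (Pi.single p.1 (1 : ℕ) : Fin d → ℕ)) r :=
        Finset.sum_congr rfl fun p _ => (h1 p).symm

/-- total degree from the multigrading. -/
theorem weight_total {M : (Fin d × Fin n) →₀ ℕ} {u : Fin d → ℕ}
    (h : Finsupp.weight (fun p : Fin d × Fin n => Pi.single p.1 (1 : ℕ)) M = u) :
    ∑ p ∈ M.support, M p = ∑ i : Fin d, u i := by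
  classical
  calc ∑ p ∈ M.support, M p
      = ∑ p ∈ M.support, ∑ i : Fin d, (M p • (Pi.single p.1 (1 : ℕ) : Fin d → ℕ)) i := by
        refine Finset.sum_congr rfl fun p _ => ?_
        simp [Pi.single_apply, Finset.sum_ite_eq']
    _ = ∑ i : Fin d, ∑ p ∈ M.support, (M p • (Pi.single p.1 (1 : ℕ) : Fin d → ℕ)) i := Finset.sum_comm
    _ = ∑ i : Fin d, u i := by
        refine Finset.sum_congr rfl fun i _ => ?_
        have := congrFun h i
        rw [Finsupp.weight_apply, Finsupp.sum, Finset.sum_apply] at this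
        exact this

theorem piAlg_mem_Vcomp {x : MvPolynomial (Fin d × Fin n) ℂ} {u : Fin d → ℕ}
    (hx : x ∈ Scomp n d u) : piAlg n d x ∈ Vcomp n (∑ i, u i) := by
  classical
  rw [Scomp, mem_weightedHomogeneousSubmodule] at hx
  rw [Vcomp, mem_homogeneousSubmodule]
  have hrw : piAlg n d x = ∑ M ∈ x.support, piAlg n d (monomial M (coeff M x)) := by
    rw [← map_sum, support_sum_monomial_coeff]
  rw [hrw]
  apply MvPolynomial.IsHomogeneous.sum
  intro M hM
  rw [piAlg, aeval_monomial]
  have h0 : (algebraMap ℂ (MvPolynomial (Fin n) ℂ)) (coeff M x) = C (coeff M x) := rfl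
  rw [h0]
  have hprod : (M.prod fun p k => (X p.2 : MvPolynomial (Fin n) ℂ) ^ k).IsHomogeneous
      (∑ p ∈ M.support, M p) := by
    apply MvPolynomial.IsHomogeneous.prod
    intro p _
    have := (isHomogeneous_X ℂ (p.2 : Fin n)).pow (M p)
    rwa [one_mul] at this
  have htot := weight_total (hx (mem_support_iff.mp hM))
  rw [htot] at hprod
  have := (isHomogeneous_C (Fin n) (coeff M x)).mul hprod
  rwa [zero_add] at this

theorem sum_v (hd : 3 ≤ d) :
    (∑ i : Fin d, if (i : ℕ) = 0 then d - 1 else if (i : ℕ) = 1 then 1 else 0) = d := by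
  have h0 : (0 : ℕ) < d := by omega
  have h1 : (1 : ℕ) < d := by omega
  have hsplit : ∀ i : Fin d, (if (i : ℕ) = 0 then d - 1 else if (i : ℕ) = 1 then 1 else 0)
      = (if i = ⟨0, h0⟩ then d - 1 else 0) + (if i = ⟨1, h1⟩ then 1 else 0) := by
    intro i
    by_cases hi0 : (i : ℕ) = 0
    · have : i = ⟨0, h0⟩ := Fin.ext hi0
      simp [this]
    · by_cases hi1 : (i : ℕ) = 1
      · have : i = ⟨1, h1⟩ := Fin.ext hi1
        simp [this, Fin.ext_iff]
      · have hne0 : i ≠ ⟨0, h0⟩ := by simp [Fin.ext_iff]; omega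
        have hne1 : i ≠ ⟨1, h1⟩ := by simp [Fin.ext_iff]; omega
        simp [hi0, hi1, hne0, hne1]
  rw [Finset.sum_congr rfl fun i _ => hsplit i, Finset.sum_add_distrib,
    Finset.sum_ite_eq' Finset.univ, Finset.sum_ite_eq' Finset.univ]
  simp only [Finset.mem_univ, if_true]
  omega

/-- extend an injection-on-`T` to a permutation. -/
theorem exists_perm_extend {α : Type*} [Fintype α] [DecidableEq α] (T : Finset α) (f : α → α)
    (hf : Set.InjOn f ↑T) : ∃ τ : Equiv.Perm α, ∀ i ∈ T, τ i = f i := by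
  classical
  have hmap : ∀ i : {x // x ∈ T}, f i.1 ∈ T.image f := fun i => Finset.mem_image_of_mem f i.2
  let g : {x // x ∈ T} → {x // x ∈ T.image f} := fun i => ⟨f i.1, hmap i⟩
  have hginj : Function.Injective g := by
    intro a b hab
    exact Subtype.ext (hf (Finset.mem_coe.mpr a.2) (Finset.mem_coe.mpr b.2)
      (congrArg Subtype.val hab))
  have hgbij : Function.Bijective g := by
    rw [Fintype.bijective_iff_injective_and_card]
    refine ⟨hginj, ?_⟩
    simp only [Fintype.card_coe]
    exact (Finset.card_image_of_injOn hf).symm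
  let e := Equiv.ofBijective g hgbij
  refine ⟨Equiv.extendSubtype e, fun i hi => ?_⟩
  rw [Equiv.extendSubtype_apply_of_mem e i hi]
  rfl

theorem prod_X_eq_monomial {α σ : Type*} [DecidableEq α] (s : Finset α) (f : α → σ) :
    (∏ x ∈ s, (X (f x) : MvPolynomial σ ℂ))
      = monomial (∑ x ∈ s, Finsupp.single (f x) 1) 1 := by
  classical
  induction s using Finset.induction_on with
  | empty => simp
  | insert _ _ hx ih =>
    rw [Finset.prod_insert hx, Finset.sum_insert hx, ih, X, monomial_mul, one_mul]

/-- differentiating a multilinear `F` by a monomial with a repeated row gives `0`. -/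
theorem diffMon_kill {F : MvPolynomial (Fin d × Fin n) ℂ}
    (hF : F.IsWeightedHomogeneous (fun p : Fin d × Fin n => Pi.single p.1 (1 : ℕ))
      (fun _ => 1))
    (b : (Fin d × Fin n) →₀ ℕ) (r : Fin d) (hb : 2 ≤ ∑ j : Fin n, b (r, j)) :
    diffMon b F = 0 := by
  classical
  rw [diffMon]
  apply Finset.sum_eq_zero
  intro M hM
  have hrow : ∑ j : Fin n, M (r, j) = 1 := by
    have := weight_row (hF (mem_support_iff.mp hM)) r
    simpa using this
  have hex : ∃ j, M (r, j) < b (r, j) := by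
    by_contra hc
    push_neg at hc
    have : ∑ j : Fin n, b (r, j) ≤ ∑ j : Fin n, M (r, j) :=
      Finset.sum_le_sum fun j _ => hc j
    omega
  obtain ⟨j, hj⟩ := hex
  have hmem : (r, j) ∈ b.support := Finsupp.mem_support_iff.mpr (by omega)
  have hz : ((M (r, j)).descFactorial (b (r, j)) : ℂ) = 0 := by
    rw [Nat.descFactorial_eq_zero_iff_lt.mpr hj, Nat.cast_zero]
  rw [Finset.prod_eq_zero hmem hz, mul_zero, zero_smul]

end Combinatorics
section KeyLemma
variable {n d : ℕ}

/-- a monomial of squarefree multidegree `u` is a product of one variable per row in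
the support of `u`. -/
theorem monomial_structure {u : Fin d → ℕ} (hu : ∀ i, u i ≤ 1) [Nonempty (Fin n)]
    (a : (Fin d × Fin n) →₀ ℕ)
    (ha : Finsupp.weight (fun p : Fin d × Fin n => Pi.single p.1 (1 : ℕ)) a = u) :
    ∃ k : Fin d → Fin n,
      a = ∑ i ∈ Finset.univ.filter (fun i => u i = 1), Finsupp.single (i, k i) (1 : ℕ) := by
  classical
  have hrow : ∀ r : Fin d, ∑ j : Fin n, a (r, j) = u r := weight_row ha
  refine ⟨fun i => if h : ∃ j, a (i, j) ≠ 0 then h.choose else Classical.arbitrary _, ?_⟩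
  set k : Fin d → Fin n :=
    fun i => if h : ∃ j, a (i, j) ≠ 0 then h.choose else Classical.arbitrary _ with hkdef
  ext p
  obtain ⟨r, j⟩ := p
  rw [Finsupp.finset_sum_apply]
  have hterm : ∀ i ∈ Finset.univ.filter (fun i => u i = 1),
      (Finsupp.single (i, k i) (1 : ℕ)) (r, j)
        = if i = r then (if k i = j then 1 else 0) else 0 := by
    intro i _
    rw [Finsupp.single_apply]
    by_cases h1 : i = r
    · by_cases h2 : k i = j <;> simp [h1, h2, Prod.ext_iff]
    · simp [h1, Prod.ext_iff]
  rw [Finset.sum_congr rfl hterm,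
    Finset.sum_ite_eq' (Finset.univ.filter (fun i => u i = 1)) r]
  by_cases hr : u r = 1
  · simp only [Finset.mem_filter, Finset.mem_univ, true_and, hr, if_true]
    have hsum : ∑ j' : Fin n, a (r, j') = 1 := by rw [hrow r, hr]
    have hex : ∃ j', a (r, j') ≠ 0 := by
      by_contra hc
      push_neg at hc
      rw [Finset.sum_eq_zero (fun j' _ => hc j')] at hsum
      omega
    have hkr : a (r, k r) ≠ 0 := by
      rw [hkdef]
      simp only [dif_pos hex]
      exact hex.choose_spec
    have hsplit : a (r, k r) + ∑ j' ∈ Finset.univ.erase (k r), a (r, j') = 1 := by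
      have h := Finset.add_sum_erase Finset.univ (fun j' => a (r, j'))
        (Finset.mem_univ (k r))
      simpa [hsum] using h
    have hrest : ∑ j' ∈ Finset.univ.erase (k r), a (r, j') = 0 := by omega
    by_cases h2 : k r = j
    · rw [if_pos h2, ← h2]
      omega
    · rw [if_neg h2]
      exact (Finset.sum_eq_zero_iff).mp hrest j
        (Finset.mem_erase.mpr ⟨fun hh => h2 hh.symm, Finset.mem_univ _⟩)
  · simp only [Finset.mem_filter, Finset.mem_univ, true_and, hr, if_false]
    have h0 : u r = 0 := by have := hu r; omega
    have hsum : ∑ j' : Fin n, a (r, j') = 0 := by rw [hrow r, h0]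
    exact (Finset.sum_eq_zero_iff).mp hsum j (Finset.mem_univ _)

/-- the key vanishing: `Ψ(ψ) ∘ F = 0` for `ψ ∈ Ann(F)_u`, `u ≤ 𝟏`, `F` symmetric
multilinear. -/
theorem apolar_PsiS_eq_zero {F : MvPolynomial (Fin d × Fin n) ℂ}
    (hF : F ∈ Scomp n d fun _ => 1) (hsym : IsSymm n d F)
    {u : Fin d → ℕ} (hu1 : ∀ i, u i ≤ 1) {s : MvPolynomial (Fin d × Fin n) ℂ}
    (hsu : s ∈ Scomp n d u) (hann : apolar F s = 0) :
    apolar F (PsiS n d s) = 0 := by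
  classical
  rw [Scomp, mem_weightedHomogeneousSubmodule] at hsu hF
  cases isEmpty_or_nonempty (Fin n) with
  | inl hemp =>
    -- no variables at all: `s` is a constant and `Ψ s = s`
    have hball : ∀ b ∈ s.support, (b : (Fin d × Fin n) →₀ ℕ) = 0 := fun b _ => by
      ext p
      exact (hemp.false p.2).elim
    have hPsi : PsiS n d s = s := by
      conv_lhs => rw [← support_sum_monomial_coeff s]
      conv_rhs => rw [← support_sum_monomial_coeff s]
      rw [map_sum]
      refine Finset.sum_congr rfl fun b hb => ?_
      rw [hball b hb, ← C_apply]
      simp [PsiS, aeval_C, algebraMap_eq]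
    rw [hPsi, hann]
  | inr hnemp =>
    set T : Finset (Fin d) := Finset.univ.filter (fun i => u i = 1) with hT
    have hstruct : ∀ b ∈ s.support, ∃ k : Fin d → Fin n,
        b = ∑ i ∈ T, Finsupp.single (i, k i) (1 : ℕ) :=
      fun b hb => monomial_structure hu1 b (hsu (mem_support_iff.mp hb))
    choose k hk using hstruct
    -- rewrite `s` as a sum of products of variables
    have hs : s = ∑ b ∈ s.support.attach,
        coeff b.1 s • ∏ i ∈ T, (X (i, k b.1 b.2 i) : MvPolynomial (Fin d × Fin n) ℂ) := by
      conv_lhs => rw [← support_sum_monomial_coeff s]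
      rw [← Finset.sum_attach s.support fun b => monomial b (coeff b s)]
      refine Finset.sum_congr rfl fun b _ => ?_
      rw [prod_X_eq_monomial, ← hk b.1 b.2, smul_monomial, smul_eq_mul, mul_one]
    -- expand `Ψ s` over row assignments
    have hexp : PsiS n d s = ∑ g ∈ T.pi (fun _ => (Finset.univ : Finset (Fin d))),
        ∑ b ∈ s.support.attach, coeff b.1 s •
          ∏ i ∈ T.attach, (X (g i.1 i.2, k b.1 b.2 i.1) : MvPolynomial (Fin d × Fin n) ℂ) := by
      conv_lhs => rw [hs]
      rw [map_sum]
      rw [Finset.sum_congr rfl (fun b _ => ?_), Finset.sum_comm]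
      rw [map_smul, map_prod]
      have hX : ∀ i ∈ T, PsiS n d (X (i, k b.1 b.2 i))
          = ∑ r : Fin d, (X (r, k b.1 b.2 i) : MvPolynomial (Fin d × Fin n) ℂ) := by
        intro i _
        rw [PsiS, aeval_X]
      rw [Finset.prod_congr rfl hX, Finset.prod_sum, Finset.smul_sum]
    rw [hexp, map_sum]
    apply Finset.sum_eq_zero
    intro g hg
    by_cases hinj : ∀ i (hi : i ∈ T) i' (hi' : i' ∈ T), g i hi = g i' hi' → i = i'
    · -- injective assignment: the inner sum is `rename τ s`, killed by symmetry
      set f : Fin d → Fin d := fun i => if h : i ∈ T then g i h else i with hfdef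
      have hfInj : Set.InjOn f ↑T := by
        intro i hi i' hi' hff
        rw [Finset.mem_coe] at hi hi'
        rw [hfdef] at hff
        simp only [dif_pos hi, dif_pos hi'] at hff
        exact hinj i hi i' hi' hff
      obtain ⟨τ, hτ⟩ := exists_perm_extend T f hfInj
      have hτg : ∀ (i : Fin d) (hi : i ∈ T), τ i = g i hi := by
        intro i hi
        rw [hτ i hi, hfdef]
        simp [dif_pos hi]
      have hren : (∑ b ∈ s.support.attach, coeff b.1 s •
          ∏ i ∈ T.attach, (X (g i.1 i.2, k b.1 b.2 i.1) : MvPolynomial (Fin d × Fin n) ℂ))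
            = rename (Prod.map ⇑τ id) s := by
        conv_rhs => rw [hs]
        rw [map_sum]
        refine Finset.sum_congr rfl fun b _ => ?_
        rw [map_smul, ← Finset.prod_attach T
          (fun i => (X (i, k b.1 b.2 i) : MvPolynomial (Fin d × Fin n) ℂ)), map_prod]
        refine congrArg _ (Finset.prod_congr rfl fun i _ => ?_)
        rw [rename_X]
        rw [Prod.map_apply, id, hτg i.1 i.2]
      rw [hren]
      -- symmetry kills it
      set e : (Fin d × Fin n) ≃ (Fin d × Fin n) := Equiv.prodCongr τ (Equiv.refl (Fin n))
        with hedef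
      have hcoe : ⇑e = Prod.map ⇑τ id := by
        rw [hedef]
        ext p
        · rfl
        · rfl
      have hFe : rename ⇑e F = F := by
        rw [hcoe]
        exact hsym τ
      rw [← hcoe, ← hFe, apolar_rename e, hann, map_zero]
    · -- non-injective assignment: each term dies against the multilinear `F`
      push_neg at hinj
      obtain ⟨i1, hi1, i2, hi2, hgeq, hne⟩ := hinj
      rw [map_sum]
      apply Finset.sum_eq_zero
      intro b _
      rw [map_smul, prod_X_eq_monomial, apolar_monomial]
      rw [diffMon_kill hF _ (g i1 hi1) ?_, smul_zero, smul_zero]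
      -- the row `g i1 hi1` is hit at least twice
      have hb : ∀ j : Fin n,
          (∑ i ∈ T.attach, Finsupp.single ((g i.1 i.2, k b.1 b.2 i.1)) (1 : ℕ)) (g i1 hi1, j)
            = ∑ i ∈ T.attach, if g i.1 i.2 = g i1 hi1 ∧ k b.1 b.2 i.1 = j then 1 else 0 := by
        intro j
        rw [Finsupp.finset_sum_apply]
        refine Finset.sum_congr rfl fun i _ => ?_
        rw [Finsupp.single_apply]
        congr 1
        simp [Prod.ext_iff]
      rw [Finset.sum_congr rfl fun j _ => hb j, Finset.sum_comm]
      have hix : ∀ i ∈ T.attach,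
          (∑ j : Fin n, if g i.1 i.2 = g i1 hi1 ∧ k b.1 b.2 i.1 = j then 1 else 0)
            = if g i.1 i.2 = g i1 hi1 then 1 else 0 := by
        intro i _
        by_cases hgi : g i.1 i.2 = g i1 hi1
        · simp [hgi]
        · simp [hgi]
      rw [Finset.sum_congr rfl hix]
      have hsub : ({⟨i1, hi1⟩, ⟨i2, hi2⟩} : Finset {x // x ∈ T}) ⊆ T.attach :=
        fun x _ => Finset.mem_attach _ _
      have hpair : ∑ i ∈ ({⟨i1, hi1⟩, ⟨i2, hi2⟩} : Finset {x // x ∈ T}),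
          (if g i.1 i.2 = g i1 hi1 then 1 else 0) = 2 := by
        rw [Finset.sum_pair (by simp [hne])]
        simp [hgeq]
      calc (2 : ℕ) = ∑ i ∈ ({⟨i1, hi1⟩, ⟨i2, hi2⟩} : Finset {x // x ∈ T}),
            (if g i.1 i.2 = g i1 hi1 then 1 else 0) := hpair.symm
        _ ≤ ∑ i ∈ T.attach, if g i.1 i.2 = g i1 hi1 then 1 else 0 :=
            Finset.sum_le_sum_of_subset hsub

end KeyLemma
/-- Lemma 5.12: for a sharp concise symmetric tensor of minimal
border rank, if `I = ∑_{0<u<𝟏} S·Ann(F)_u`, then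
`π(I_{(d−1)e_1 + e_2}) ⊆ Ann(p_F)_d`. -/
theorem stmt_15 (n d : ℕ) (hd : 3 ≤ d)
    (F : MvPolynomial (Fin d × Fin n) ℂ)
    (hF : F ∈ Scomp n d fun _ => 1) (hsym : IsSymm n d F) (hconc : Concise n d F)
    (hsharp : Sharp n d F) (hbrk : brk n d F = n) :
    Submodule.map (piL n d) (restrictScalars ℂ (midIdeal n d F) ⊓
        Scomp n d fun i => if (i : ℕ) = 0 then d - 1 else if (i : ℕ) = 1 then 1 else 0) ≤
      ann (pF n d F) ⊓ Vcomp n d := by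
  rintro y hy
  rw [Submodule.mem_map] at hy
  obtain ⟨x, hx, rfl⟩ := hy
  rw [Submodule.mem_inf] at hx
  obtain ⟨hxI, hxS⟩ := hx
  rw [Submodule.mem_inf]
  constructor
  · -- the annihilator part
    have hxI' : x ∈ midIdeal n d F := hxI
    have key : apolar F (PsiS n d x) = 0 := by
      rw [midIdeal] at hxI'
      refine Submodule.span_induction ?_ ?_ ?_ ?_ hxI'
      · intro z hz
        rw [Set.mem_iUnion₂] at hz
        obtain ⟨u, hu, hzu⟩ := hz
        rw [SetLike.mem_coe, Submodule.mem_inf] at hzu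
        obtain ⟨hzann, hzS⟩ := hzu
        have hu1 : ∀ i, u i ≤ 1 := fun i => by
          have := (Pi.lt_def.mp hu.2).1 i
          simpa using this
        exact apolar_PsiS_eq_zero hF hsym hu1 hzS (LinearMap.mem_ker.mp hzann)
      · rw [map_zero, map_zero]
      · intro z w _ _ hz hw
        rw [map_add, map_add, hz, hw, add_zero]
      · intro r z _ hz
        rw [smul_eq_mul, map_mul, apolar_mul, hz, apolar_zero_left]
    have hcomp : PsiV n d (piAlg n d x) = PsiS n d x := by
      have hext : (PsiV n d).comp (piAlg n d) = PsiS n d := by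
        apply MvPolynomial.algHom_ext
        intro p
        simp [PsiV, piAlg, PsiS, aeval_X]
      calc PsiV n d (piAlg n d x) = ((PsiV n d).comp (piAlg n d)) x := rfl
        _ = PsiS n d x := by rw [hext]
    show piL n d x ∈ ann (pF n d F)
    rw [ann, LinearMap.mem_ker]
    have hpil : piL n d x = piAlg n d x := rfl
    rw [hpil, pF, apolar_rename_snd, hcomp, key, map_zero]
  · -- the degree part
    have hdeg := piAlg_mem_Vcomp hxS
    rwa [sum_v hd] at hdeg

end BorderComon
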